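/- Let G be a group, n ≥ 3, E the set of idempotents of End F_n(G), and IG(E) the free idempotent generated monoid over E. Let a : {1,…,n} → G with a(1) = 1 and let j, k ∈ {1,…,n}. If a(j) = a(k) (equivalently, e_{1j} e_{a,1} = e_{1k} e_{a,1} in End F_n(G)), then ē_{11} ē_{a,j} ē_{11} = ē_{11} ē_{a,k} ē_{11} in IG(E). -/

import Mathlib

/-- An endomorphism of the rank-`n` free left `G`-act `F_n(G) = G × Fin n`
(the formal symbols `g x_i` are the pairs `(g, i)`), where the action is
`h • (g, i) = (h * g, i)` and equivariance says `(h • x) a = h • (x a)`. -/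
structure ActEnd (G : Type*) [Group G] (n : ℕ) : Type _ where
  toFun : G × Fin n → G × Fin n
  equivariant : ∀ (h : G) (x : G × Fin n),
    toFun (h * x.1, x.2) = (h * (toFun x).1, (toFun x).2)

namespace ActEnd

variable {G : Type*} [Group G] {n : ℕ}

/-- Composition is written left-to-right: `x (a * b) = (x a) b`. -/
instance : Monoid (ActEnd G n) where
  mul a b := ⟨fun x => b.toFun (a.toFun x), by
    intro h x
    try dsimp only
    rw [a.equivariant h x, b.equivariant]⟩
  one := ⟨id, fun _ _ => rfl⟩
  mul_assoc _ _ _ := rfl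
  one_mul _ := rfl
  mul_one _ := rfl

@[simp] theorem mul_toFun (a b : ActEnd G n) (x : G × Fin n) :
    (a * b).toFun x = b.toFun (a.toFun x) := rfl

theorem ext' {a b : ActEnd G n} (h : a.toFun = b.toFun) : a = b := by
  cases a; cases b; cases h; rfl

/-- The rank of an endomorphism of `F_n(G)`: the number of indices `j` such
that `G x_j` meets the image. -/
noncomputable def rank (a : ActEnd G n) : ℕ :=
  Nat.card {j : Fin n // ∃ x, (a.toFun x).2 = j}

end ActEnd

namespace ActEnd

variable {G : Type*} [Group G] {n : ℕ}

/-- The rank-1 idempotent `e_{a,j}` given by `(g x_t) e_{a,j} = (g * a t * (a j)⁻¹) x_j`.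
Taking `a` constantly `1` gives `e_{1j}`, and also `j = 0` gives `e_{11}`
(indices `1, …, n` are realised as `Fin n`, with `1 ↦ 0`). -/
def eaj (a : Fin n → G) (j : Fin n) : ActEnd G n :=
  ⟨fun x => (x.1 * a x.2 * (a j)⁻¹, j), by intro h x; simp [mul_assoc]⟩

theorem eaj_idem (a : Fin n → G) (j : Fin n) : eaj a j * eaj a j = eaj a j := by
  apply ext'
  funext x
  simp [eaj, mul_assoc]

/-- The map `a_g : g' x_t ↦ (g' * g) x_1`. -/
def aMap (g : G) (h0 : 0 < n) : ActEnd G n :=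
  ⟨fun x => (x.1 * g, ⟨0, h0⟩), by intro h x; simp [mul_assoc]⟩

end ActEnd

/-- The principal left ideal `M a` of `a`. -/
def lIdeal {M : Type*} [Monoid M] (a : M) : Set M := Set.range fun m => m * a

/-- The principal right ideal `a M` of `a`. -/
def rIdeal {M : Type*} [Monoid M] (a : M) : Set M := Set.range fun m => a * m

/-- The `H`-class of `e`: all elements that are both `L`- and `R`-related to `e`. -/
def hClass {M : Type*} [Monoid M] (e : M) : Set M :=
  {a | lIdeal a = lIdeal e ∧ rIdeal a = rIdeal e}

/-- The defining relation of the free idempotent generated monoid `IG(E)`: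
`ē f̄ = (e f)‾` whenever `{e, f} ∩ {e f, f e} ≠ ∅`. -/
def igRel (M : Type*) [Monoid M] :
    FreeMonoid {e : M // e * e = e} → FreeMonoid {e : M // e * e = e} → Prop :=
  fun x y => ∃ e f g : {e : M // e * e = e},
    (e.1 * f.1 = e.1 ∨ e.1 * f.1 = f.1 ∨ f.1 * e.1 = e.1 ∨ f.1 * e.1 = f.1) ∧
    e.1 * f.1 = g.1 ∧
    x = FreeMonoid.of e * FreeMonoid.of f ∧ y = FreeMonoid.of g

/-- The free idempotent generated monoid over the biordered set of idempotents
of `M`: the presented monoid with generators `ē` for each idempotent `e` and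
relations `ē f̄ = (e f)‾` whenever `{e, f} ∩ {e f, f e} ≠ ∅`. -/
abbrev IG (M : Type*) [Monoid M] : Type _ := (conGen (igRel M)).Quotient

/-- The generator `ē` of `IG(E)` corresponding to the idempotent `e`. -/
def ebar {M : Type*} [Monoid M] (e : {e : M // e * e = e}) : IG M :=
  (conGen (igRel M)).mk' (FreeMonoid.of e)

/-- `ē_{a,j}` as an element of `IG(E)` for `E` the idempotents of `End F_n(G)`. -/
def igE {G : Type*} [Group G] {n : ℕ} (a : Fin n → G) (j : Fin n) : IG (ActEnd G n) :=
  ebar ⟨ActEnd.eaj a j, ActEnd.eaj_idem a j⟩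

/-- `ē_{11}` as an element of `IG(E)`. -/
def ig11 {G : Type*} [Group G] {n : ℕ} (h0 : 0 < n) : IG (ActEnd G n) :=
  igE (fun _ => (1 : G)) ⟨0, h0⟩


section StmtAux

open ActEnd

variable {G : Type*} [Group G] {n : ℕ}

/-- A general endomorphism given by a group part `c` and an index part `ρ`. -/
def mk2 (c : Fin n → G) (ρ : Fin n → Fin n) : ActEnd G n :=
  ⟨fun x => (x.1 * c x.2, ρ x.2), by intro h x; simp [mul_assoc]⟩

theorem mk2_idem (c : Fin n → G) (ρ : Fin n → Fin n)
    (h1 : ∀ t, c (ρ t) = 1) (h2 : ∀ t, ρ (ρ t) = ρ t) :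
    mk2 c ρ * mk2 c ρ = mk2 c ρ := by
  apply ActEnd.ext'
  funext x
  simp [mk2, h1, h2, mul_assoc]

/-- The basic relation of `IG(E)`, as an equation between generators. -/
theorem igrel_mul {M : Type*} [Monoid M] (e f g : {e : M // e * e = e})
    (hb : e.1 * f.1 = e.1 ∨ e.1 * f.1 = f.1 ∨ f.1 * e.1 = e.1 ∨ f.1 * e.1 = f.1)
    (hg : e.1 * f.1 = g.1) : ebar e * ebar f = ebar g := by
  have h : conGen (igRel M) (FreeMonoid.of e * FreeMonoid.of f) (FreeMonoid.of g) :=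
    ConGen.Rel.of _ _ ⟨e, f, g, hb, hg, rfl, rfl⟩
  calc ebar e * ebar f
      = (conGen (igRel M)).mk' (FreeMonoid.of e * FreeMonoid.of f) := (map_mul _ _ _).symm
    _ = ebar g := (Con.eq _).mpr h

theorem key {n : ℕ} (h0 : 0 < n) (a : Fin n → G) (ha : a ⟨0, h0⟩ = 1)
    (j k : Fin n) (hk : k ≠ ⟨0, h0⟩) (hjk : a j = a k) :
    igE a j * ig11 (G := G) (n := n) h0 = igE a k * ig11 (G := G) (n := n) h0 := by
  set z : Fin n := ⟨0, h0⟩ with hz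
  set q : Fin n → G := fun t => if t = j ∨ t = k then 1 else a t with hq
  have hqj : q j = 1 := by simp [hq]
  have hqk : q k = 1 := by simp [hq]
  have hqz : q z = 1 := by
    by_cases h : z = j ∨ z = k <;> simp [hq, h, ha]
  -- index maps
  set σ : Fin n → Fin n := fun t => if t = j then j else z with hσ
  set σ' : Fin n → Fin n := fun t => if t = k then k else z with hσ'
  set ρ : Fin n → Fin n := fun t => if t = j ∨ t = k then j else z with hρ
  have triv : ∀ w : Fin n, (if z = w then w else z) = z := by
    intro w
    by_cases h : z = w
    · rw [if_pos h, h]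
    · rw [if_neg h]
  have trivρ : (if z = j ∨ z = k then j else z) = z := by
    by_cases h : z = j
    · rw [if_pos (Or.inl h), h]
    · rw [if_neg (fun hc => hc.elim h (fun h2 => hk h2.symm))]
  have hσj : σ j = j := by simp [hσ]
  have hσ'k : σ' k = k := by simp [hσ']
  have hσz : σ z = z := by simp only [hσ]; exact triv j
  have hσ'z : σ' z = z := by simp only [hσ']; exact triv k
  have hρz : ρ z = z := by simp only [hρ]; exact trivρ
  have hρj : ρ j = j := by simp [hρ]
  have hρk : ρ k = j := by simp [hρ]
  have hqρ : ∀ t, q (ρ t) = 1 := by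
    intro t
    by_cases h : t = j ∨ t = k <;> simp only [hρ, h, if_true, if_false, hqj, hqz]
  have hqσ : ∀ t, q (σ t) = 1 := by
    intro t
    by_cases h : t = j <;> simp only [hσ, h, if_true, if_false, hqj, hqz]
  have hqσ' : ∀ t, q (σ' t) = 1 := by
    intro t
    by_cases h : t = k <;> simp only [hσ', h, if_true, if_false, hqk, hqz]
  -- the idempotents
  have hu : mk2 q σ * mk2 q σ = mk2 q σ := by
    refine mk2_idem _ _ hqσ ?_
    intro t
    simp only [hσ]
    by_cases h : t = j
    · simp [h]
    · rw [if_neg h]; exact triv j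
  have hu' : mk2 q σ' * mk2 q σ' = mk2 q σ' := by
    refine mk2_idem _ _ hqσ' ?_
    intro t
    simp only [hσ']
    by_cases h : t = k
    · simp [h]
    · rw [if_neg h]; exact triv k
  have hs : mk2 q ρ * mk2 q ρ = mk2 q ρ := by
    refine mk2_idem _ _ hqρ ?_
    intro t
    simp only [hρ]
    by_cases h : t = j ∨ t = k
    · rw [if_pos h, if_pos (Or.inl rfl)]
    · rw [if_neg h]; exact trivρ
  have he0 : mk2 q (fun _ => z) * mk2 q (fun _ => z) = mk2 q (fun _ => z) :=
    mk2_idem _ _ (fun _ => hqz) (fun _ => rfl)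
  set Ej : {e : ActEnd G n // e * e = e} := ⟨eaj a j, eaj_idem a j⟩ with hEj
  set Ek : {e : ActEnd G n // e * e = e} := ⟨eaj a k, eaj_idem a k⟩ with hEk
  set E1 : {e : ActEnd G n // e * e = e} :=
    ⟨eaj (fun _ => (1 : G)) z, eaj_idem _ z⟩ with hE1
  set U : {e : ActEnd G n // e * e = e} := ⟨mk2 q σ, hu⟩ with hU
  set U' : {e : ActEnd G n // e * e = e} := ⟨mk2 q σ', hu'⟩ with hU'
  set S : {e : ActEnd G n // e * e = e} := ⟨mk2 q ρ, hs⟩ with hS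
  set E0 : {e : ActEnd G n // e * e = e} := ⟨mk2 q (fun _ => z), he0⟩ with hE0
  -- the nine product computations
  have R1 : eaj a j * mk2 q σ = eaj a j := by
    apply ActEnd.ext'; funext x
    simp [eaj, mk2, hσj, hqj]
  have R2 : eaj (fun _ => (1 : G)) z * mk2 q σ = eaj (fun _ => (1 : G)) z := by
    apply ActEnd.ext'; funext x
    simp [eaj, mk2, hσz, hqz]
  have R3 : mk2 q σ * eaj (fun _ => (1 : G)) z = mk2 q (fun _ => z) := by
    apply ActEnd.ext'; funext x
    simp [eaj, mk2]
  have R4 : eaj a k * mk2 q σ' = eaj a k := by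
    apply ActEnd.ext'; funext x
    simp [eaj, mk2, hσ'k, hqk]
  have R5 : eaj (fun _ => (1 : G)) z * mk2 q σ' = eaj (fun _ => (1 : G)) z := by
    apply ActEnd.ext'; funext x
    simp [eaj, mk2, hσ'z, hqz]
  have R6 : mk2 q σ' * eaj (fun _ => (1 : G)) z = mk2 q (fun _ => z) := by
    apply ActEnd.ext'; funext x
    simp [eaj, mk2]
  have R7 : mk2 q ρ * eaj a k = eaj a k := by
    apply ActEnd.ext'; funext x
    obtain ⟨g, t⟩ := x
    simp only [ActEnd.mul_toFun, eaj, mk2]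
    by_cases h : t = j ∨ t = k
    · have h1 : q t = 1 := by simp [hq, h]
      have h2 : ρ t = j := by simp [hρ, h]
      have h3 : a t = a k := by rcases h with h | h <;> simp [h, hjk]
      simp [h1, h2, h3, hjk]
    · have h1 : q t = a t := by simp [hq, h]
      have h2 : ρ t = z := by simp [hρ, h]
      simp [h1, h2, ha, mul_assoc]
  have R8 : eaj a k * mk2 q ρ = eaj a j := by
    apply ActEnd.ext'; funext x
    simp [eaj, mk2, hρk, hqk, hjk]
  have R9 : mk2 q ρ * mk2 q (fun _ => z) = mk2 q (fun _ => z) := by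
    apply ActEnd.ext'; funext x
    simp [mk2, hqρ, hqz]
  -- the IG relations
  have A : ebar Ej * ebar U = ebar Ej := igrel_mul Ej U Ej (Or.inl R1) R1
  have B : ebar U * ebar E1 = ebar E0 :=
    igrel_mul U E1 E0 (Or.inr (Or.inr (Or.inr R2))) R3
  have C : ebar Ek * ebar S = ebar Ej :=
    igrel_mul Ek S Ej (Or.inr (Or.inr (Or.inl R7))) R8
  have D : ebar S * ebar E0 = ebar E0 := igrel_mul S E0 E0 (Or.inr (Or.inl R9)) R9
  have E : ebar U' * ebar E1 = ebar E0 :=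
    igrel_mul U' E1 E0 (Or.inr (Or.inr (Or.inr R5))) R6
  have F : ebar Ek * ebar U' = ebar Ek := igrel_mul Ek U' Ek (Or.inl R4) R4
  -- conclude
  show ebar Ej * ebar E1 = ebar Ek * ebar E1
  calc ebar Ej * ebar E1
      = ebar Ej * ebar U * ebar E1 := by rw [A]
    _ = ebar Ej * (ebar U * ebar E1) := mul_assoc _ _ _
    _ = ebar Ej * ebar E0 := by rw [B]
    _ = ebar Ek * ebar S * ebar E0 := by rw [C]
    _ = ebar Ek * (ebar S * ebar E0) := mul_assoc _ _ _
    _ = ebar Ek * ebar E0 := by rw [D]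
    _ = ebar Ek * (ebar U' * ebar E1) := by rw [E]
    _ = ebar Ek * ebar U' * ebar E1 := (mul_assoc _ _ _).symm
    _ = ebar Ek * ebar E1 := by rw [F]

end StmtAux

/-- If `a j = a k` (equivalently `e_{1j} e_{a,1} = e_{1k} e_{a,1}`), then
`ē_{11} ē_{a,j} ē_{11} = ē_{11} ē_{a,k} ē_{11}` in `IG(E)`. -/
theorem stmt15 {G : Type*} [Group G] {n : ℕ} (hn : 3 ≤ n)
    (a : Fin n → G) (ha : a ⟨0, by omega⟩ = 1) (j k : Fin n) (hjk : a j = a k) :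
    ig11 (G := G) (n := n) (by omega) * igE a j * ig11 (G := G) (n := n) (by omega) =
      ig11 (G := G) (n := n) (by omega) * igE a k * ig11 (G := G) (n := n) (by omega) := by
  have h0 : 0 < n := by omega
  rw [mul_assoc, mul_assoc]
  by_cases hk : k = (⟨0, h0⟩ : Fin n)
  · by_cases hj : j = (⟨0, h0⟩ : Fin n)
    · rw [hj, hk]
    · have h := key h0 a ha k j hj hjk.symm
      exact congrArg (ig11 h0 * ·) h.symm
  · have h := key h0 a ha j k hk hjk
    exact congrArg (ig11 h0 * ·) h
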